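/- Suppose N ≥ 3 vectors h₁, …, h_N in R^2 satisfy: each |h_j| > 0, their span is two-dimensional, and for every j (indices mod N) there is a constant κ ∈ ℝ with κ(h_{j+1} + h_j)^⊥ + (h_j/|h_j| - h_{j+1}/|h_{j+1}|) = 0. Then all |h_j| are equal. -/

import Mathlib

open RealInnerProductSpace

/-- Clockwise rotation by π/2: (v₁, v₂) ↦ (v₂, -v₁). -/
noncomputable def perp (v : EuclideanSpace ℝ (Fin 2)) : EuclideanSpace ℝ (Fin 2) :=
  WithLp.toLp 2 ![v 1, -v 0]

lemma perp_inner_self (v : EuclideanSpace ℝ (Fin 2)) : ⟪perp v, v⟫ = 0 := by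
  simp [perp, PiLp.inner_apply, Fin.sum_univ_two]; ring

lemma perp_eq_zero {v : EuclideanSpace ℝ (Fin 2)} (hv : perp v = 0) : v = 0 := by
  ext i
  fin_cases i
  · have := congrFun (congrArg WithLp.ofLp hv) 1; simpa [perp] using this
  · have := congrFun (congrArg WithLp.ofLp hv) 0; simpa [perp] using this

theorem stmt_6 (N : ℕ) [NeZero N] (hN : 3 ≤ N) (h : Fin N → EuclideanSpace ℝ (Fin 2))
    (hpos : ∀ j, 0 < ‖h j‖)
    (hspan : Submodule.span ℝ (Set.range h) = ⊤)
    (κ : ℝ)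
    (heq : ∀ j : Fin N,
      κ • perp (h (j + 1) + h j) + (‖h j‖⁻¹ • h j - ‖h (j + 1)‖⁻¹ • h (j + 1)) = 0) :
    ∀ i j : Fin N, ‖h i‖ = ‖h j‖ := by
  -- u j : unit vectors
  set u : Fin N → EuclideanSpace ℝ (Fin 2) := fun j => ‖h j‖⁻¹ • h j with hu
  -- key dichotomy
  have key : ∀ j : Fin N, ‖h (j + 1)‖ = ‖h j‖ ∨ u (j + 1) = u j := by
    intro j
    set a := ‖h j‖ with ha
    set b := ‖h (j + 1)‖ with hb
    have hapos := hpos j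
    have hbpos := hpos (j + 1)
    set w := h (j + 1) + h j with hw
    have H0 : ⟪κ • perp w + (‖h j‖⁻¹ • h j - ‖h (j + 1)‖⁻¹ • h (j + 1)), w⟫ = 0 := by
      rw [heq j]; exact inner_zero_left w
    set d := ⟪h j, h (j + 1)⟫ with hd
    have hsym : ⟪h (j + 1), h j⟫ = d := real_inner_comm _ _
    have H1 : a⁻¹ * (d + a ^ 2) - b⁻¹ * (b ^ 2 + d) = 0 := by
      have := H0
      rw [inner_add_left, real_inner_smul_left, perp_inner_self, inner_sub_left,
        real_inner_smul_left, real_inner_smul_left, hw, inner_add_right, inner_add_right,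
        real_inner_self_eq_norm_sq, real_inner_self_eq_norm_sq, hsym] at this
      rw [← ha, ← hb, ← hd] at this
      linarith [this]
    have H2 : (a - b) * (a * b - d) = 0 := by
      have ha' : a ≠ 0 := ne_of_gt hapos
      have hb' : b ≠ 0 := ne_of_gt hbpos
      field_simp at H1
      nlinarith [H1]
    rcases mul_eq_zero.mp H2 with hc | hc
    · left; linarith [sub_eq_zero.mp hc]
    · right
      have hdab : d = a * b := by linarith
      have := inner_eq_norm_mul_iff_real.mp (by rw [← hd, hdab, ← ha, ← hb])
      -- this : ‖h (j+1)‖ • h j = ‖h j‖ • h (j+1), i.e. b • h j = a • h (j+1)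
      have hsc : b • h j = a • h (j + 1) := this
      have : b⁻¹ • h (j + 1) = a⁻¹ • h j := by
        have := congrArg (fun x => (a⁻¹ * b⁻¹) • x) hsc
        simp only [smul_smul] at this
        rw [show a⁻¹ * b⁻¹ * b = a⁻¹ by rw [mul_assoc, inv_mul_cancel₀ (show b ≠ 0 from ne_of_gt hbpos), mul_one], show a⁻¹ * b⁻¹ * a = b⁻¹ by rw [mul_right_comm, inv_mul_cancel₀ (show a ≠ 0 from ne_of_gt hapos), one_mul]] at this
        exact this.symm
      simpa [hu, ← ha, ← hb] using this
  -- parallel case ⇒ κ • perp w = 0 with w sum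
  have par : ∀ j : Fin N, u (j + 1) = u j → κ • perp (h (j + 1) + h j) = 0 := by
    intro j hj
    have := heq j
    rw [show ‖h j‖⁻¹ • h j - ‖h (j + 1)‖⁻¹ • h (j + 1) = u j - u (j + 1) from rfl, hj,
      sub_self, add_zero] at this
    exact this
  by_cases hκ : κ = 0
  · -- all unit vectors equal; contradict span
    exfalso
    have hall : ∀ j : Fin N, u (j + 1) = u j := by
      intro j
      have := heq j
      rw [hκ, zero_smul, zero_add, sub_eq_zero] at this
      exact this.symm
    open Fin.NatCast in
    have hchain : ∀ n : ℕ, u ((n : Fin N)) = u 0 := by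
      intro n
      induction n with
      | zero => simp
      | succ k ih => rw [show ((k + 1 : ℕ) : Fin N) = (k : Fin N) + 1 by push_cast; ring,
          hall, ih]
    have hmem : ∀ j : Fin N, h j ∈ Submodule.span ℝ {h 0} := by
      intro j
      have hj : u j = u 0 := by
        have := hchain j.val
        rwa [Fin.cast_val_eq_self] at this
      have hj' : h j = ‖h j‖ • (‖h 0‖⁻¹ • h 0) := by
        have h2 := congrArg (fun x => ‖h j‖ • x) hj
        simp only [hu, smul_smul, mul_inv_cancel₀ (ne_of_gt (hpos j)), one_smul] at h2
        rw [smul_smul]; exact h2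
      rw [hj']
      exact Submodule.smul_mem _ _ (Submodule.smul_mem _ _ (Submodule.mem_span_singleton_self _))
    have hle : Submodule.span ℝ (Set.range h) ≤ Submodule.span ℝ {h 0} := by
      rw [Submodule.span_le]
      rintro x ⟨j, rfl⟩
      exact hmem j
    rw [hspan] at hle
    have hp : perp (h 0) ∈ Submodule.span ℝ {h 0} := hle Submodule.mem_top
    rcases Submodule.mem_span_singleton.mp hp with ⟨c, hc⟩
    have : (0 : ℝ) = c * ‖h 0‖ ^ 2 := by
      have := perp_inner_self (h 0)
      rw [← hc, real_inner_smul_left, real_inner_self_eq_norm_sq] at this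
      linarith
    have hc0 : c = 0 := by
      have hsq : (0:ℝ) < ‖h 0‖ ^ 2 := pow_pos (hpos 0) 2
      rcases mul_eq_zero.mp this.symm with h1 | h1
      · exact h1
      · exact absurd h1 (ne_of_gt hsq)
    rw [hc0, zero_smul] at hc
    have := perp_eq_zero hc.symm
    have := hpos 0
    rw [‹h 0 = 0›] at this
    simp at this
  · -- κ ≠ 0: consecutive norms equal
    have hall : ∀ j : Fin N, ‖h (j + 1)‖ = ‖h j‖ := by
      intro j
      rcases key j with hk | hk
      · exact hk
      · exfalso
        have hz := par j hk
        have hw0 : h (j + 1) + h j = 0 := perp_eq_zero (by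
          rcases smul_eq_zero.mp hz with h1 | h1
          · exact absurd h1 hκ
          · exact h1)
        -- then u (j+1) = -u j, combined with hk gives u j = 0
        have hneg : h (j + 1) = -h j := by
          have := hw0; linear_combination (norm := abel_nf) this
        have hnorm : ‖h (j + 1)‖ = ‖h j‖ := by rw [hneg, norm_neg]
        have : u (j + 1) = -u j := by
          simp only [hu, hneg, hnorm, smul_neg, norm_neg]
        rw [hk] at this
        have h2 : (2 : ℝ) • u j = 0 := by
          rw [two_smul]
          nth_rewrite 1 [this]
          abel
        have hj0 : u j = 0 := by
          rcases smul_eq_zero.mp h2 with h1 | h1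
          · norm_num at h1
          · exact h1
        have : h j = 0 := by
          have := congrArg (fun x => ‖h j‖ • x) hj0
          simp only [hu, smul_smul, mul_inv_cancel₀ (ne_of_gt (hpos j)), one_smul,
            smul_zero] at this
          exact this
        have := hpos j
        rw [‹h j = 0›] at this
        simp at this
    open Fin.NatCast in
    have hchain : ∀ n : ℕ, ‖h ((n : Fin N))‖ = ‖h 0‖ := by
      intro n
      induction n with
      | zero => simp
      | succ k ih => rw [show ((k + 1 : ℕ) : Fin N) = (k : Fin N) + 1 by push_cast; ring,
          hall, ih]
    intro i j
    have hi := hchain i.val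
    have hj := hchain j.val
    rw [Fin.cast_val_eq_self] at hi hj
    rw [hi, hj]
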